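/- Let $K : \mathbb{R}^d \to \mathbb{R}$ satisfy $\lambda |y|^{-(d+s)} \le K(y) \le \Lambda |y|^{-(d+s)}$ with $0 < \lambda \le \Lambda$ and $s \in (0,1)$. Let $E \subset \mathbb{R}^d$ be a Borel set, $x \in \partial E$, and $r_0 > 0$. There exists $\gamma > 0$, depending only on $d$, $s$, $\lambda$, and $\Lambda$, such that if $|E \cap B_r(x)| \le \gamma |B_r|$ for all $r \in (0, r_0]$, then $\lim_{\varepsilon \to 0^+} \int_{\mathbb{R}^d \setminus B_\varepsilon(x)} \tilde\chi_E(y) K(x-y)\, dy = +\infty$. -/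

import Mathlib

open MeasureTheory Metric Filter Topology
open scoped ENNReal

noncomputable def tchi {d : ℕ} (E : Set (EuclideanSpace ℝ (Fin d))) (y : EuclideanSpace ℝ (Fin d)) : ℝ :=
  Set.indicator Eᶜ (fun _ => (1:ℝ)) y - Set.indicator E (fun _ => (1:ℝ)) y

noncomputable def curvInt {d : ℕ} (K : EuclideanSpace ℝ (Fin d) → ℝ)
    (E : Set (EuclideanSpace ℝ (Fin d))) (x : EuclideanSpace ℝ (Fin d)) (ε : ℝ) : ℝ :=
  ∫ y in (ball x ε)ᶜ, tchi E y * K (x - y)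

/-- The principal-value nonlocal mean curvature of `E` at `x` exists and equals `L ∈ [-∞,∞]`. -/
def HasCurvE {d : ℕ} (K : EuclideanSpace ℝ (Fin d) → ℝ) (E : Set (EuclideanSpace ℝ (Fin d)))
    (x : EuclideanSpace ℝ (Fin d)) (L : EReal) : Prop :=
  Tendsto (fun ε => ((curvInt K E x ε : ℝ) : EReal)) (𝓝[>] (0:ℝ)) (𝓝 L)

/-- `λ |y|^{-(d+s)} ≤ K(y) ≤ Λ |y|^{-(d+s)}`. -/
def KernelBounds {d : ℕ} (K : EuclideanSpace ℝ (Fin d) → ℝ) (s lam Lam : ℝ) : Prop :=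
  ∀ y : EuclideanSpace ℝ (Fin d), y ≠ 0 →
    lam * ‖y‖ ^ (-((d:ℝ) + s)) ≤ K y ∧ K y ≤ Lam * ‖y‖ ^ (-((d:ℝ) + s))

/-- `E` is touched at `x` by an exterior ball. -/
def ExtBall {d : ℕ} (E : Set (EuclideanSpace ℝ (Fin d))) (x : EuclideanSpace ℝ (Fin d)) : Prop :=
  ∃ z ρ, 0 < ρ ∧ ball z ρ ⊆ Eᶜ ∧ x ∈ sphere z ρ

/-- `curv_{K,E} ≤ C₀` in `Ω` in the viscosity sense. -/
def ViscSubsol {d : ℕ} (K : EuclideanSpace ℝ (Fin d) → ℝ) (E : Set (EuclideanSpace ℝ (Fin d)))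
    (Ω : Set (EuclideanSpace ℝ (Fin d))) (C₀ : ℝ) : Prop :=
  ∀ x ∈ frontier E ∩ Ω, ExtBall E x → ∀ L : EReal, HasCurvE K E x L → L ≤ (C₀ : EReal)

/-- `curv_{K,E} ≥ C₀` in `Ω` in the viscosity sense. -/
def ViscSupersol {d : ℕ} (K : EuclideanSpace ℝ (Fin d) → ℝ) (E : Set (EuclideanSpace ℝ (Fin d)))
    (Ω : Set (EuclideanSpace ℝ (Fin d))) (C₀ : ℝ) : Prop :=
  ∀ x ∈ frontier E ∩ Ω, (∃ z ρ, 0 < ρ ∧ ball z ρ ⊆ E ∧ x ∈ sphere z ρ) →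
    ∀ L : EReal, HasCurvE K E x L → (C₀ : EReal) ≤ L

section Aux

variable {d : ℕ}

lemma tchi_abs_le (E : Set (EuclideanSpace ℝ (Fin d))) (y : EuclideanSpace ℝ (Fin d)) :
    |tchi E y| ≤ 1 := by
  unfold tchi
  by_cases hy : y ∈ E <;> simp [Set.indicator_apply, hy]

lemma tchi_of_not_mem {E : Set (EuclideanSpace ℝ (Fin d))} {y : EuclideanSpace ℝ (Fin d)}
    (hy : y ∉ E) : tchi E y = 1 := by
  unfold tchi; simp [Set.indicator_apply, hy]

lemma tchi_of_mem {E : Set (EuclideanSpace ℝ (Fin d))} {y : EuclideanSpace ℝ (Fin d)}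
    (hy : y ∈ E) : tchi E y = -1 := by
  unfold tchi; simp [Set.indicator_apply, hy]

lemma measurable_tchi {E : Set (EuclideanSpace ℝ (Fin d))} (hE : MeasurableSet E) :
    Measurable (tchi E) :=
  (measurable_const.indicator hE.compl).sub (measurable_const.indicator hE)

lemma integrableOn_tchiK {s lam Lam : ℝ} (hs0 : 0 < s) (hlam : 0 < lam) (hLam : lam ≤ Lam)
    {K : EuclideanSpace ℝ (Fin d) → ℝ} (hK : Measurable K) (hKb : KernelBounds K s lam Lam)
    {E : Set (EuclideanSpace ℝ (Fin d))} (hE : MeasurableSet E)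
    (x : EuclideanSpace ℝ (Fin d)) {ε : ℝ} (hε : 0 < ε) :
    IntegrableOn (fun y => tchi E y * K (x - y)) ((ball x ε)ᶜ) volume := by
  have hLam0 : 0 < Lam := lt_of_lt_of_le hlam hLam
  set p : ℝ := (d : ℝ) + s with hpdef
  have hp0 : 0 < p := by positivity
  have hfin : ((Module.finrank ℝ (EuclideanSpace ℝ (Fin d)) : ℝ)) < p := by
    rw [finrank_euclideanSpace_fin, hpdef]; linarith
  have hint0 : Integrable (fun y : EuclideanSpace ℝ (Fin d) => (1 + ‖y‖) ^ (-p)) :=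
    integrable_one_add_norm hfin
  have hint : Integrable
      (fun y : EuclideanSpace ℝ (Fin d) => (Lam * (1 + 1/ε) ^ p) * (1 + ‖x - y‖) ^ (-p)) :=
    (hint0.comp_sub_left x).const_mul _
  refine Integrable.mono' hint.restrict ?_ ?_
  · exact ((measurable_tchi hE).mul (hK.comp (measurable_id.const_sub x))).aestronglyMeasurable
  · filter_upwards [ae_restrict_mem measurableSet_ball.compl] with y hy
    have hdist : ε ≤ ‖x - y‖ := by
      have h1 : ε ≤ dist y x := le_of_not_gt (by simpa [mem_ball] using hy)
      rwa [dist_comm, dist_eq_norm] at h1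
    have hnz : 0 < ‖x - y‖ := lt_of_lt_of_le hε hdist
    have hne : x - y ≠ 0 := by
      intro h; rw [h, norm_zero] at hnz; exact lt_irrefl _ hnz
    obtain ⟨hK1, hK2⟩ := hKb (x - y) hne
    have hKpos : 0 ≤ K (x - y) := le_trans (by positivity) hK1
    have h1z : (0:ℝ) < 1 + ‖x - y‖ := by positivity
    have hb : (0:ℝ) < 1 + 1/ε := by positivity
    have hkey : ‖x - y‖ ^ (-p) ≤ (1 + 1/ε) ^ p * (1 + ‖x - y‖) ^ (-p) := by
      have hdd : (1 + ‖x - y‖) / (1 + 1/ε) ≤ ‖x - y‖ := by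
        rw [div_le_iff₀ hb, mul_add, mul_one, mul_one_div]
        have h1 : 1 ≤ ‖x - y‖ / ε := (one_le_div hε).2 hdist
        linarith
      have hpos' : 0 < (1 + ‖x - y‖) / (1 + 1/ε) := by positivity
      have h2 := Real.rpow_le_rpow_of_nonpos hpos' hdd (neg_nonpos.2 hp0.le)
      calc ‖x - y‖ ^ (-p) ≤ ((1 + ‖x - y‖) / (1 + 1/ε)) ^ (-p) := h2
        _ = (1 + 1/ε) ^ p * (1 + ‖x - y‖) ^ (-p) := by
            rw [Real.div_rpow h1z.le hb.le, Real.rpow_neg hb.le, div_inv_eq_mul, mul_comm]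
    calc ‖tchi E y * K (x - y)‖ = |tchi E y| * |K (x - y)| := by
          rw [Real.norm_eq_abs, abs_mul]
      _ ≤ 1 * |K (x - y)| := by
          exact mul_le_mul_of_nonneg_right (tchi_abs_le E y) (abs_nonneg _)
      _ = K (x - y) := by rw [one_mul, abs_of_nonneg hKpos]
      _ ≤ Lam * ‖x - y‖ ^ (-p) := hK2
      _ ≤ Lam * ((1 + 1/ε) ^ p * (1 + ‖x - y‖) ^ (-p)) :=
          mul_le_mul_of_nonneg_left hkey hLam0.le
      _ = (Lam * (1 + 1/ε) ^ p) * (1 + ‖x - y‖) ^ (-p) := by ring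

end Aux
set_option maxHeartbeats 1000000 in
theorem stmt_9 (d : ℕ) (s lam Lam : ℝ) (hs : s ∈ Set.Ioo (0 : ℝ) 1)
    (hlam : 0 < lam) (hLam : lam ≤ Lam) :
    ∃ γ : ℝ, 0 < γ ∧
      ∀ (K : EuclideanSpace ℝ (Fin d) → ℝ), Measurable K →
        KernelBounds K s lam Lam →
      ∀ (E : Set (EuclideanSpace ℝ (Fin d))), MeasurableSet E →
      ∀ x ∈ frontier E, ∀ r₀ : ℝ, 0 < r₀ →
        (∀ r ∈ Set.Ioc (0 : ℝ) r₀,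
          volume (E ∩ ball x r) ≤
            ENNReal.ofReal γ * volume (ball (0 : EuclideanSpace ℝ (Fin d)) r)) →
        Tendsto (fun ε => curvInt K E x ε) (𝓝[>] (0 : ℝ)) atTop := by
  obtain ⟨hs0, hs1⟩ := hs
  have hLam0 : 0 < Lam := lt_of_lt_of_le hlam hLam
  rcases Nat.eq_zero_or_pos d with hd | hd
  · -- degenerate case d = 0 : the space is a single point, frontier E = ∅
    subst hd
    refine ⟨1, one_pos, ?_⟩
    intro K _ _ E _ x hx r₀ _ _
    exfalso
    have hsing : Subsingleton (EuclideanSpace ℝ (Fin 0)) :=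
      ⟨fun a b => PiLp.ext fun i => i.elim0⟩
    rcases E.eq_empty_or_nonempty with rfl | ⟨z, hz⟩
    · rw [frontier_empty] at hx; exact hx
    · have hE : E = Set.univ := Set.eq_univ_of_forall fun w => by
        have : w = z := hsing.elim w z
        rwa [this]
      rw [hE, frontier_univ] at hx; exact hx
  -- main case d ≥ 1
  haveI : Nontrivial (EuclideanSpace ℝ (Fin d)) :=
    Module.nontrivial_of_finrank_pos (R := ℝ)
      (by rw [finrank_euclideanSpace_fin]; exact_mod_cast hd)
  set p : ℝ := (d : ℝ) + s with hpdef
  have hp0 : 0 < p := by positivity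
  set a2 : ℝ := (2:ℝ) ^ (-(d:ℝ)) with ha2def
  set b2 : ℝ := (2:ℝ) ^ ((d:ℝ) + 1) with hb2def
  have ha2 : 0 < a2 := Real.rpow_pos_of_pos two_pos _
  have hb2 : 0 < b2 := Real.rpow_pos_of_pos two_pos _
  have ha2lt : a2 < 1 := by
    rw [ha2def]
    apply Real.rpow_lt_one_of_one_lt_of_neg one_lt_two
    simp only [neg_neg, Left.neg_neg_iff]
    exact_mod_cast hd
  set c : ℝ := lam * (1 - a2) / 2 with hcdef
  have hc : 0 < c := by
    rw [hcdef]; have : 0 < 1 - a2 := by linarith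
    positivity
  set γ : ℝ := c / (lam + 2 * (Lam * b2)) with hγdef
  have hden0 : 0 < lam + 2 * (Lam * b2) := by positivity
  have hγ : 0 < γ := div_pos hc hden0
  have hγc : γ * (lam + 2 * (Lam * b2)) = c := div_mul_cancel₀ c hden0.ne'
  have F2 : Lam * b2 * γ ≤ c / 2 := by nlinarith [mul_pos hlam hγ]
  have F1 : c ≤ lam * (1 - a2 - γ) - Lam * b2 * γ := by
    nlinarith [mul_pos (mul_pos hLam0 hb2) hγ]
  refine ⟨γ, hγ, ?_⟩
  intro K hK hKb E hE x _hx r₀ hr₀ hden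
  -- basic volume facts
  set ω : ℝ := (volume (ball (0 : EuclideanSpace ℝ (Fin d)) 1)).toReal with hωdef
  have hω : 0 < ω := ENNReal.toReal_pos (measure_ball_pos volume _ one_pos).ne' measure_ball_lt_top.ne
  have hvol : ∀ (z : EuclideanSpace ℝ (Fin d)) (r : ℝ), 0 ≤ r →
      (volume (ball z r)).toReal = r ^ ((d:ℝ)) * ω := by
    intro z r hr
    rw [Measure.addHaar_ball volume z hr, finrank_euclideanSpace_fin, ENNReal.toReal_mul,
      ENNReal.toReal_ofReal (pow_nonneg hr _), Real.rpow_natCast]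
  -- integrability
  have hI : ∀ {ε : ℝ}, 0 < ε →
      IntegrableOn (fun y => tchi E y * K (x - y)) ((ball x ε)ᶜ) volume :=
    fun hε => integrableOn_tchiK hs0 hlam hLam hK hKb hE x hε
  -- density in real form
  have hden' : ∀ R : ℝ, 0 < R → R ≤ r₀ →
      (volume (E ∩ ball x R)).toReal ≤ γ * (R ^ ((d:ℝ)) * ω) := by
    intro R h1 h2
    have h := hden R ⟨h1, h2⟩
    have h3 := ENNReal.toReal_mono
      (ENNReal.mul_ne_top ENNReal.ofReal_ne_top measure_ball_lt_top.ne) h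
    rwa [ENNReal.toReal_mul, ENNReal.toReal_ofReal hγ.le, hvol 0 R h1.le] at h3
  -- generic annulus lower bound
  have hann : ∀ a R : ℝ, 0 < a → a ≤ R → R ≤ r₀ →
      lam * R ^ (-p) * (volume ((ball x R \ ball x a) \ E)).toReal
        - Lam * a ^ (-p) * (volume ((ball x R \ ball x a) ∩ E)).toReal
      ≤ ∫ y in ball x R \ ball x a, tchi E y * K (x - y) := by
    intro a R ha haR hR
    set A := ball x R \ ball x a with hAdef
    have hAm : MeasurableSet A := measurableSet_ball.diff measurableSet_ball
    have hAsub : A ⊆ ball x R := Set.diff_subset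
    have hAc : A ⊆ (ball x a)ᶜ := fun y hy => hy.2
    have hint1 : IntegrableOn (fun y => tchi E y * K (x - y)) (A \ E) volume :=
      (hI ha).mono_set (Set.diff_subset.trans hAc)
    have hint2 : IntegrableOn (fun y => tchi E y * K (x - y)) (A ∩ E) volume :=
      (hI ha).mono_set (Set.inter_subset_left.trans hAc)
    have hfin1 : volume (A \ E) ≠ ⊤ :=
      ((measure_mono (Set.diff_subset.trans hAsub)).trans_lt measure_ball_lt_top).ne
    have hfin2 : volume (A ∩ E) ≠ ⊤ :=
      ((measure_mono (Set.inter_subset_left.trans hAsub)).trans_lt measure_ball_lt_top).ne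
    have hsplit : (∫ y in A, tchi E y * K (x - y))
        = (∫ y in A \ E, tchi E y * K (x - y)) + ∫ y in A ∩ E, tchi E y * K (x - y) := by
      rw [← setIntegral_union Set.disjoint_sdiff_inter (hAm.inter hE) hint1 hint2,
        Set.diff_union_inter]
    -- pointwise bounds
    have hlow : ∀ y ∈ A \ E, lam * R ^ (-p) ≤ tchi E y * K (x - y) := by
      intro y hy
      have hyA : y ∈ A := hy.1
      have hdista : a ≤ ‖x - y‖ := by
        have : ¬ dist y x < a := hyA.2
        rw [dist_comm, dist_eq_norm] at this
        exact le_of_not_gt this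
      have hdistR : ‖x - y‖ ≤ R := by
        have : dist y x < R := hyA.1
        rw [dist_comm, dist_eq_norm] at this
        exact this.le
      have hnz : 0 < ‖x - y‖ := lt_of_lt_of_le ha hdista
      have hne : x - y ≠ 0 := by
        intro h; rw [h, norm_zero] at hnz; exact lt_irrefl _ hnz
      obtain ⟨hK1, _⟩ := hKb (x - y) hne
      have hmono : R ^ (-p) ≤ ‖x - y‖ ^ (-p) :=
        Real.rpow_le_rpow_of_nonpos hnz hdistR (neg_nonpos.2 hp0.le)
      rw [tchi_of_not_mem hy.2, one_mul]
      calc lam * R ^ (-p) ≤ lam * ‖x - y‖ ^ (-p) := mul_le_mul_of_nonneg_left hmono hlam.le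
        _ ≤ K (x - y) := hK1
    have hhigh : ∀ y ∈ A ∩ E, -(Lam * a ^ (-p)) ≤ tchi E y * K (x - y) := by
      intro y hy
      have hyA : y ∈ A := hy.1
      have hdista : a ≤ ‖x - y‖ := by
        have : ¬ dist y x < a := hyA.2
        rw [dist_comm, dist_eq_norm] at this
        exact le_of_not_gt this
      have hnz : 0 < ‖x - y‖ := lt_of_lt_of_le ha hdista
      have hne : x - y ≠ 0 := by
        intro h; rw [h, norm_zero] at hnz; exact lt_irrefl _ hnz
      obtain ⟨_, hK2⟩ := hKb (x - y) hne
      have hmono : ‖x - y‖ ^ (-p) ≤ a ^ (-p) :=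
        Real.rpow_le_rpow_of_nonpos ha hdista (neg_nonpos.2 hp0.le)
      rw [tchi_of_mem hy.2, neg_one_mul, neg_le_neg_iff]
      calc K (x - y) ≤ Lam * ‖x - y‖ ^ (-p) := hK2
        _ ≤ Lam * a ^ (-p) := mul_le_mul_of_nonneg_left hmono hLam0.le
    have hb1 := setIntegral_ge_of_const_le_real (hAm.diff hE) hfin1 hlow hint1
    have hb2' := setIntegral_ge_of_const_le_real (hAm.inter hE) hfin2 hhigh hint2
    simp only [measureReal_def] at hb1 hb2'
    rw [hsplit]
    have : -(Lam * a ^ (-p)) * (volume (A ∩ E)).toReal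
        = -(Lam * a ^ (-p) * (volume (A ∩ E)).toReal) := by ring
    linarith [hb1, hb2']
  -- rpow helpers
  have hhalfpow : ∀ (R q : ℝ), 0 < R → (R / 2) ^ (-q) = 2 ^ q * R ^ (-q) := by
    intro R q hR
    rw [Real.div_rpow hR.le (by norm_num : (0:ℝ) ≤ 2), Real.rpow_neg (by norm_num : (0:ℝ) ≤ 2),
      div_inv_eq_mul, mul_comm]
  -- core annulus estimate
  have hcore : ∀ R : ℝ, 0 < R → R ≤ r₀ →
      c * ω * R ^ (-s) ≤ ∫ y in ball x R \ ball x (R / 2), tchi E y * K (x - y) := by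
    intro R hR hRr
    have h := hann (R / 2) R (by linarith) (by linarith) hRr
    set A := ball x R \ ball x (R / 2) with hAdef
    set v₁ : ℝ := (volume (A \ E)).toReal with hv₁def
    set v₂ : ℝ := (volume (A ∩ E)).toReal with hv₂def
    have hv₁0 : 0 ≤ v₁ := ENNReal.toReal_nonneg
    have hv₂0 : 0 ≤ v₂ := ENNReal.toReal_nonneg
    set t : ℝ := R ^ (-p) with htdef
    set u : ℝ := R ^ ((d:ℝ)) with hudef
    have ht : 0 < t := Real.rpow_pos_of_pos hR _
    have hu : 0 < u := Real.rpow_pos_of_pos hR _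
    have htu : t * u = R ^ (-s) := by
      rw [htdef, hudef, ← Real.rpow_add hR]
      congr 1
      rw [hpdef]; ring
    -- volume of A ∩ E
    have hv2 : v₂ ≤ γ * (u * ω) := by
      have hsub : A ∩ E ⊆ E ∩ ball x R := fun y hy => ⟨hy.2, hy.1.1⟩
      have h1 : volume (A ∩ E) ≤ ENNReal.ofReal γ * volume (ball (0 : EuclideanSpace ℝ (Fin d)) R) :=
        (measure_mono hsub).trans (hden R ⟨hR, hRr⟩)
      have h2 := ENNReal.toReal_mono
        (ENNReal.mul_ne_top ENNReal.ofReal_ne_top measure_ball_lt_top.ne) h1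
      rw [ENNReal.toReal_mul, ENNReal.toReal_ofReal hγ.le, hvol 0 R hR.le] at h2
      exact h2
    -- volume covering estimate
    have hfinh : volume (ball x (R/2)) ≠ ⊤ := measure_ball_lt_top.ne
    have hfin1 : volume (A \ E) ≠ ⊤ :=
      ((measure_mono (Set.diff_subset.trans Set.diff_subset)).trans_lt measure_ball_lt_top).ne
    have hfin2 : volume (A ∩ E) ≠ ⊤ :=
      ((measure_mono (Set.inter_subset_left.trans Set.diff_subset)).trans_lt measure_ball_lt_top).ne
    have hcov : ball x R ⊆ ball x (R/2) ∪ ((A \ E) ∪ (A ∩ E)) := by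
      intro y hy
      by_cases h1 : y ∈ ball x (R/2)
      · exact Or.inl h1
      · right
        by_cases h2 : y ∈ E
        · exact Or.inr ⟨⟨hy, h1⟩, h2⟩
        · exact Or.inl ⟨⟨hy, h1⟩, h2⟩
    have hmeas : volume (ball x R) ≤ volume (ball x (R/2)) + (volume (A \ E) + volume (A ∩ E)) :=
      (measure_mono hcov).trans ((measure_union_le _ _).trans
        (add_le_add_right (measure_union_le _ _) _))
    have hv : (volume (ball x R)).toReal ≤ (volume (ball x (R/2))).toReal + (v₁ + v₂) := by
      have h4 := ENNReal.toReal_mono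
        (by exact ENNReal.add_ne_top.2 ⟨hfinh, ENNReal.add_ne_top.2 ⟨hfin1, hfin2⟩⟩) hmeas
      rwa [ENNReal.toReal_add hfinh (ENNReal.add_ne_top.2 ⟨hfin1, hfin2⟩),
        ENNReal.toReal_add hfin1 hfin2] at h4
    have hhalfvol : (volume (ball x (R/2))).toReal = a2 * u * ω := by
      rw [hvol x (R/2) (by positivity), ha2def, hudef,
        Real.div_rpow hR.le (by norm_num : (0:ℝ) ≤ 2), Real.rpow_neg (by norm_num : (0:ℝ) ≤ 2)]
      ring
    have hv1' : u * ω - a2 * u * ω - v₂ ≤ v₁ := by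
      rw [hvol x R hR.le, hhalfvol] at hv
      linarith
    have hhalfp : (R/2) ^ (-p) ≤ b2 * t := by
      rw [hhalfpow R p hR, htdef]
      have h2p : (2:ℝ) ^ p ≤ b2 := by
        rw [hb2def]
        exact (Real.rpow_le_rpow_left_iff one_lt_two).2 (by rw [hpdef]; linarith)
      exact mul_le_mul_of_nonneg_right h2p ht.le
    -- combine
    have e1 : Lam * ((R/2) ^ (-p)) * v₂ ≤ Lam * (b2 * t) * v₂ :=
      mul_le_mul_of_nonneg_right (mul_le_mul_of_nonneg_left hhalfp hLam0.le) hv₂0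
    have e2 : lam * t * (u * ω - a2 * (u * ω) - γ * (u * ω)) ≤ lam * t * v₁ := by
      apply mul_le_mul_of_nonneg_left _ (by positivity)
      linarith [hv2]
    have e3 : Lam * (b2 * t) * v₂ ≤ Lam * (b2 * t) * (γ * (u * ω)) :=
      mul_le_mul_of_nonneg_left hv2 (by positivity)
    have e4 : c * ω * R ^ (-s)
        ≤ lam * t * (u * ω - a2 * (u * ω) - γ * (u * ω)) - Lam * (b2 * t) * (γ * (u * ω)) := by
      have expand : lam * t * (u * ω - a2 * (u * ω) - γ * (u * ω)) - Lam * (b2 * t) * (γ * (u * ω))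
          = (lam * (1 - a2 - γ) - Lam * b2 * γ) * (t * (u * ω)) := by ring
      rw [expand]
      have h5 : c * (t * (u * ω)) ≤ (lam * (1 - a2 - γ) - Lam * b2 * γ) * (t * (u * ω)) :=
        mul_le_mul_of_nonneg_right F1 (by positivity)
      calc c * ω * R ^ (-s) = c * (t * (u * ω)) := by rw [← htu]; ring
        _ ≤ _ := h5
    linarith [h, e1, e2, e3, e4]
  -- leftover (partial annulus) lower bound
  have hleft : ∀ R ε : ℝ, 0 < ε → R / 2 ≤ ε → ε ≤ R → R ≤ r₀ →
      -(c * ω / 2 * R ^ (-s)) ≤ ∫ y in ball x R \ ball x ε, tchi E y * K (x - y) := by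
    intro R ε hε hRε hεR hRr
    have hR : 0 < R := lt_of_lt_of_le hε hεR
    have h := hann ε R hε hεR hRr
    set A := ball x R \ ball x ε with hAdef
    set v₁ : ℝ := (volume (A \ E)).toReal with hv₁def
    set v₂ : ℝ := (volume (A ∩ E)).toReal with hv₂def
    have hv₁0 : 0 ≤ v₁ := ENNReal.toReal_nonneg
    have hv₂0 : 0 ≤ v₂ := ENNReal.toReal_nonneg
    set t : ℝ := R ^ (-p) with htdef
    set u : ℝ := R ^ ((d:ℝ)) with hudef
    have ht : 0 < t := Real.rpow_pos_of_pos hR _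
    have hu : 0 < u := Real.rpow_pos_of_pos hR _
    have htu : t * u = R ^ (-s) := by
      rw [htdef, hudef, ← Real.rpow_add hR]
      congr 1
      rw [hpdef]; ring
    have hv2 : v₂ ≤ γ * (u * ω) := by
      have hsub : A ∩ E ⊆ E ∩ ball x R := fun y hy => ⟨hy.2, hy.1.1⟩
      have h1 : volume (A ∩ E) ≤ ENNReal.ofReal γ * volume (ball (0 : EuclideanSpace ℝ (Fin d)) R) :=
        (measure_mono hsub).trans (hden R ⟨hR, hRr⟩)
      have h2 := ENNReal.toReal_mono
        (ENNReal.mul_ne_top ENNReal.ofReal_ne_top measure_ball_lt_top.ne) h1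
      rw [ENNReal.toReal_mul, ENNReal.toReal_ofReal hγ.le, hvol 0 R hR.le] at h2
      exact h2
    have hεp : ε ^ (-p) ≤ (R/2) ^ (-p) :=
      Real.rpow_le_rpow_of_nonpos (by positivity) hRε (neg_nonpos.2 hp0.le)
    have hhalfp : (R/2) ^ (-p) ≤ b2 * t := by
      rw [hhalfpow R p hR, htdef]
      have h2p : (2:ℝ) ^ p ≤ b2 := by
        rw [hb2def]
        exact (Real.rpow_le_rpow_left_iff one_lt_two).2 (by rw [hpdef]; linarith)
      exact mul_le_mul_of_nonneg_right h2p ht.le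
    have e1 : Lam * ε ^ (-p) * v₂ ≤ Lam * (b2 * t) * v₂ :=
      mul_le_mul_of_nonneg_right
        (mul_le_mul_of_nonneg_left (hεp.trans hhalfp) hLam0.le) hv₂0
    have e3 : Lam * (b2 * t) * v₂ ≤ Lam * (b2 * t) * (γ * (u * ω)) :=
      mul_le_mul_of_nonneg_left hv2 (by positivity)
    have e4 : Lam * (b2 * t) * (γ * (u * ω)) ≤ c / 2 * (t * (u * ω)) := by
      have expand : Lam * (b2 * t) * (γ * (u * ω)) = (Lam * b2 * γ) * (t * (u * ω)) := by ring
      rw [expand]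
      exact mul_le_mul_of_nonneg_right F2 (by positivity)
    have e5 : lam * t * v₁ ≥ 0 := by positivity
    have efin : c * ω / 2 * R ^ (-s) = c / 2 * (t * (u * ω)) := by rw [← htu]; ring
    linarith [h, e1, e3, e4, e5]
  -- dyadic radii
  set Rj : ℕ → ℝ := fun J => r₀ * (1/2 : ℝ) ^ J with hRjdef
  have hRjpos : ∀ J, 0 < Rj J := by intro J; rw [hRjdef]; positivity
  have hRjanti : ∀ {i j : ℕ}, i ≤ j → Rj j ≤ Rj i := by
    intro i j hij
    rw [hRjdef]
    exact mul_le_mul_of_nonneg_left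
      (pow_le_pow_of_le_one (by norm_num) (by norm_num) hij) hr₀.le
  have hRjle : ∀ J, Rj J ≤ r₀ := by
    intro J
    have := hRjanti (Nat.zero_le J)
    simpa [hRjdef] using this
  have hRjstep : ∀ J, Rj (J + 1) = Rj J / 2 := by
    intro J; rw [hRjdef]; simp [pow_succ]; ring
  set κ : ℝ := c * ω / 2 * r₀ ^ (-s) with hκdef
  have hκ : 0 < κ := by
    rw [hκdef]
    have := Real.rpow_pos_of_pos hr₀ (-s)
    positivity
  -- dyadic induction
  have hS : ∀ J : ℕ, (J : ℝ) * κ + c * ω / 2 * ((Rj J) ^ (-s) - r₀ ^ (-s))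
      ≤ ∫ y in ball x r₀ \ ball x (Rj J), tchi E y * K (x - y) := by
    intro J
    induction J with
    | zero =>
      have h0 : Rj 0 = r₀ := by rw [hRjdef]; simp
      rw [h0]
      simp
    | succ J ih =>
      have hdec : ball x r₀ \ ball x (Rj (J+1))
          = (ball x r₀ \ ball x (Rj J)) ∪ (ball x (Rj J) \ ball x (Rj (J+1))) :=
        (Set.diff_union_diff_cancel (ball_subset_ball (hRjle J))
          (ball_subset_ball (by rw [hRjstep J]; linarith [hRjpos J]))).symm
      have hdisj : Disjoint (ball x r₀ \ ball x (Rj J)) (ball x (Rj J) \ ball x (Rj (J+1))) :=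
        Set.disjoint_left.mpr fun y hy₁ hy₂ => hy₁.2 hy₂.1
      have hintA : IntegrableOn (fun y => tchi E y * K (x - y))
          (ball x r₀ \ ball x (Rj J)) volume :=
        (hI (hRjpos J)).mono_set fun y hy => hy.2
      have hintB : IntegrableOn (fun y => tchi E y * K (x - y))
          (ball x (Rj J) \ ball x (Rj (J+1))) volume :=
        (hI (hRjpos (J+1))).mono_set fun y hy => hy.2
      have hsplit : (∫ y in ball x r₀ \ ball x (Rj (J+1)), tchi E y * K (x - y))
          = (∫ y in ball x r₀ \ ball x (Rj J), tchi E y * K (x - y))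
            + ∫ y in ball x (Rj J) \ ball x (Rj (J+1)), tchi E y * K (x - y) := by
        rw [hdec, setIntegral_union hdisj (measurableSet_ball.diff measurableSet_ball) hintA hintB]
      have hann' : c * ω * (Rj J) ^ (-s)
          ≤ ∫ y in ball x (Rj J) \ ball x (Rj (J+1)), tchi E y * K (x - y) := by
        rw [hRjstep J]
        exact hcore (Rj J) (hRjpos J) (hRjle J)
      -- rpow comparisons
      have hmono1 : r₀ ^ (-s) ≤ (Rj J) ^ (-s) :=
        Real.rpow_le_rpow_of_nonpos (hRjpos J) (hRjle J) (neg_nonpos.2 hs0.le)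
      have hmono2 : (Rj (J+1)) ^ (-s) ≤ 2 * (Rj J) ^ (-s) := by
        rw [hRjstep J, hhalfpow (Rj J) s (hRjpos J)]
        have h2s : (2:ℝ) ^ s ≤ 2 := by
          have := (Real.rpow_le_rpow_left_iff (x := (2:ℝ)) one_lt_two).2 hs1.le
          rwa [Real.rpow_one] at this
        exact mul_le_mul_of_nonneg_right h2s (Real.rpow_pos_of_pos (hRjpos J) _).le
      have hcω : (0:ℝ) ≤ c * ω / 2 := by positivity
      have m1 := mul_le_mul_of_nonneg_left hmono1 hcω
      have m2 := mul_le_mul_of_nonneg_left hmono2 hcω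
      rw [hsplit]
      push_cast
      rw [hκdef] at *
      linarith [ih, hann', m1, m2]
  -- the tail integral
  set T : ℝ := ∫ y in (ball x r₀)ᶜ, tchi E y * K (x - y) with hTdef
  rw [Filter.tendsto_atTop]
  intro M
  obtain ⟨N, hN⟩ := exists_nat_ge ((M - T + κ) / κ)
  have hNκ : M - T + κ ≤ (N:ℝ) * κ := by
    rw [div_le_iff₀ hκ] at hN; linarith
  filter_upwards [Ioc_mem_nhdsGT_of_mem (Set.mem_Ico.2 ⟨le_refl (0:ℝ), hRjpos N⟩)] with ε hε
  obtain ⟨hε0, hεN⟩ := hε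
  classical
  have hPex : ∃ j : ℕ, Rj (j+1) < ε := by
    obtain ⟨n, hn⟩ := exists_pow_lt_of_lt_one (div_pos hε0 hr₀) (by norm_num : (1/2:ℝ) < 1)
    refine ⟨n, lt_of_le_of_lt (hRjanti (Nat.le_succ n)) ?_⟩
    rw [hRjdef]
    calc r₀ * (1/2:ℝ)^n < r₀ * (ε / r₀) := by
          exact mul_lt_mul_of_pos_left hn hr₀
      _ = ε := by field_simp
  obtain ⟨J, hJ1, hJmin⟩ : ∃ J : ℕ, Rj (J+1) < ε ∧ ∀ m < J, ¬ Rj (m+1) < ε :=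
    ⟨Nat.find hPex, Nat.find_spec hPex, fun m hm => Nat.find_min hPex hm⟩
  have hJN : N ≤ J := by
    by_contra hlt
    push_neg at hlt
    exact hJ1.not_ge (le_trans hεN (hRjanti (by omega)))
  have hJ2 : ε ≤ Rj J := by
    rcases Nat.eq_zero_or_pos J with rfl | hpos
    · exact le_trans hεN (hRjanti (Nat.zero_le N))
    · have h1 := hJmin (J-1) (by omega)
      have h' : J - 1 + 1 = J := by omega
      rw [h'] at h1
      exact not_lt.1 h1
  have hεr₀ : ε ≤ r₀ := le_trans hJ2 (hRjle J)
  have hcompl : (ball x ε)ᶜ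
      = (ball x r₀)ᶜ ∪ ((ball x r₀ \ ball x (Rj J)) ∪ (ball x (Rj J) \ ball x ε)) := by
    rw [Set.diff_union_diff_cancel (ball_subset_ball (hRjle J)) (ball_subset_ball hJ2)]
    ext y
    simp only [Set.mem_compl_iff, Set.mem_union, Set.mem_diff]
    constructor
    · intro h
      by_cases h2 : y ∈ ball x r₀
      · exact Or.inr ⟨h2, h⟩
      · exact Or.inl h2
    · rintro (h | h) hb
      · exact h (ball_subset_ball hεr₀ hb)
      · exact h.2 hb
  have hd1 : Disjoint ((ball x r₀)ᶜ)
      ((ball x r₀ \ ball x (Rj J)) ∪ (ball x (Rj J) \ ball x ε)) := by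
    rw [Set.disjoint_left]
    rintro y hy (h | h)
    · exact hy h.1
    · exact hy (ball_subset_ball (hRjle J) h.1)
  have hd2 : Disjoint (ball x r₀ \ ball x (Rj J)) (ball x (Rj J) \ ball x ε) :=
    Set.disjoint_left.mpr fun y hy₁ hy₂ => hy₁.2 hy₂.1
  have hi1 : IntegrableOn (fun y => tchi E y * K (x - y)) ((ball x r₀)ᶜ) volume := hI hr₀
  have hi2 : IntegrableOn (fun y => tchi E y * K (x - y)) (ball x r₀ \ ball x (Rj J)) volume :=
    (hI (hRjpos J)).mono_set fun y hy => hy.2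
  have hi3 : IntegrableOn (fun y => tchi E y * K (x - y)) (ball x (Rj J) \ ball x ε) volume :=
    (hI hε0).mono_set fun y hy => hy.2
  have hsplit : curvInt K E x ε
      = T + ((∫ y in ball x r₀ \ ball x (Rj J), tchi E y * K (x - y))
          + ∫ y in ball x (Rj J) \ ball x ε, tchi E y * K (x - y)) := by
    unfold curvInt
    rw [hcompl,
      setIntegral_union hd1
        ((measurableSet_ball.diff measurableSet_ball).union
          (measurableSet_ball.diff measurableSet_ball)) hi1 (hi2.union hi3),
      setIntegral_union hd2 (measurableSet_ball.diff measurableSet_ball) hi2 hi3]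
  have hSJ := hS J
  have hLJ := hleft (Rj J) ε hε0 (by rw [← hRjstep J]; exact hJ1.le) hJ2 (hRjle J)
  have hm : (N:ℝ) * κ ≤ (J:ℝ) * κ :=
    mul_le_mul_of_nonneg_right (by exact_mod_cast hJN) hκ.le
  rw [hsplit]
  have hκe : κ = c * ω / 2 * r₀ ^ (-s) := hκdef
  linarith [hSJ, hLJ, hm, hNκ, hκe]
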